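/- For Y ~ N(θ,1) truncated to |Y| ≥ c and an observed value x ≥ c, the conditional MLE θ̂(x) (the solution of x = E_θ[X]) satisfies θ̂(x) ≤ x, and θ̂(x)/x → 1 as x → ∞; i.e., the amount of shrinkage x - θ̂(x) tends to 0 as the observation moves far from the threshold. -/

import Mathlib

open MeasureTheory Set Filter

noncomputable def phi (x : ℝ) : ℝ := (Real.sqrt (2 * Real.pi))⁻¹ * Real.exp (-x ^ 2 / 2)

noncomputable def Phi (x : ℝ) : ℝ := ∫ t in Iic x, phi t

/-- `Q_c(θ) = Φ(θ-c) + Φ(-θ-c) = P(|N(θ,1)| ≥ c)`. -/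
noncomputable def Qc (c θ : ℝ) : ℝ := Phi (θ - c) + Phi (-θ - c)

/-- Mean of the two-sided truncated normal with location `θ`,
truncation set `{|x| ≥ c}`. -/
noncomputable def condMean (c θ : ℝ) : ℝ :=
  θ + (phi (c - θ) - phi (-c - θ)) / Qc c θ

lemma phi_pos (x : ℝ) : 0 < phi x := by
  unfold phi
  positivity

lemma phi_int : Integrable phi := by
  have h : Integrable (fun x : ℝ => Real.exp (-(1/2 : ℝ) * x ^ 2)) :=
    integrable_exp_neg_mul_sq (by norm_num)
  have h2 := h.const_mul (Real.sqrt (2 * Real.pi))⁻¹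
  refine h2.congr (Filter.Eventually.of_forall fun x => ?_)
  unfold phi; ring_nf

lemma Phi_pos (x : ℝ) : 0 < Phi x := by
  unfold Phi
  rw [setIntegral_pos_iff_support_of_nonneg_ae
    (Filter.Eventually.of_forall fun t => (phi_pos t).le) (phi_int.integrableOn)]
  have : Function.support phi = Set.univ := by
    ext t; simp [Function.mem_support, (phi_pos t).ne']
  rw [this, Set.univ_inter]
  simp [Real.volume_Iic]

lemma Phi_mono {a b : ℝ} (h : a ≤ b) : Phi a ≤ Phi b := by
  unfold Phi
  exact setIntegral_mono_set phi_int.integrableOn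
    (Filter.Eventually.of_forall fun t => (phi_pos t).le)
    ((Iic_subset_Iic.2 h).eventuallyLE)

lemma phi_anti {a b : ℝ} (h : b ^ 2 ≤ a ^ 2) : phi a ≤ phi b := by
  unfold phi
  have : Real.exp (-a ^ 2 / 2) ≤ Real.exp (-b ^ 2 / 2) := Real.exp_le_exp.2 (by linarith)
  have hnn : (0:ℝ) ≤ (Real.sqrt (2 * Real.pi))⁻¹ := by positivity
  exact mul_le_mul_of_nonneg_left this hnn

lemma phi_tendsto : Tendsto phi atTop (nhds 0) := by
  have h1 : Tendsto (fun x : ℝ => -x ^ 2 / 2) atTop atBot := by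
    apply Filter.Tendsto.atBot_div_const (by norm_num)
    exact tendsto_neg_atBot_iff.2 (tendsto_pow_atTop (by norm_num))
  have h2 : Tendsto (fun x : ℝ => Real.exp (-x ^ 2 / 2)) atTop (nhds 0) :=
    Real.tendsto_exp_atBot.comp h1
  have h3 := h2.const_mul (Real.sqrt (2 * Real.pi))⁻¹
  rw [mul_zero] at h3
  exact h3

lemma key (c : ℝ) (hc : 0 < c) (x θ : ℝ) (hx : c ≤ x) (h : x = condMean c θ) :
    0 < θ ∧ θ ≤ x ∧ x - θ ≤ phi (c - θ) / Phi (-c) := by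
  have hQ : 0 < Qc c θ := add_pos (Phi_pos _) (Phi_pos _)
  have hθ : 0 < θ := by
    by_contra hθ
    push_neg at hθ
    have hnum : phi (c - θ) - phi (-c - θ) ≤ 0 := by
      have : phi (c - θ) ≤ phi (-c - θ) := phi_anti (by nlinarith)
      linarith
    have : x ≤ θ := by
      rw [h]; unfold condMean
      nlinarith [div_nonpos_of_nonpos_of_nonneg hnum hQ.le]
    linarith
  have hnum : 0 ≤ phi (c - θ) - phi (-c - θ) := by
    have : phi (-c - θ) ≤ phi (c - θ) := phi_anti (by nlinarith)
    linarith
  have hQge : Phi (-c) ≤ Qc c θ := by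
    have h1 : Phi (-c) ≤ Phi (θ - c) := Phi_mono (by linarith)
    have h2 : 0 < Phi (-θ - c) := Phi_pos _
    unfold Qc; linarith
  refine ⟨hθ, ?_, ?_⟩
  · rw [h]; unfold condMean
    nlinarith [div_nonneg hnum hQ.le]
  · have hxθ : x - θ = (phi (c - θ) - phi (-c - θ)) / Qc c θ := by
      rw [h]; unfold condMean; ring
    rw [hxθ]
    have hP : 0 < Phi (-c) := Phi_pos _
    calc (phi (c - θ) - phi (-c - θ)) / Qc c θ
        ≤ (phi (c - θ) - phi (-c - θ)) / Phi (-c) := by gcongr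
      _ ≤ phi (c - θ) / Phi (-c) := by
          gcongr
          have := phi_pos (-c - θ); linarith

/-- for observed values `x ≥ c`, the conditional MLE `θ̂(x)`
(the solution of `x = E_θ[X]`) satisfies `θ̂(x) ≤ x`, and `θ̂(x)/x → 1` as
`x → ∞`; the amount of shrinkage `x - θ̂(x)` tends to `0`. -/
theorem conditional_mle_shrinkage_vanishes (c : ℝ) (hc : 0 < c)
    (θhat : ℝ → ℝ) (hsol : ∀ x : ℝ, c ≤ x → x = condMean c (θhat x)) :
    (∀ x : ℝ, c ≤ x → θhat x ≤ x) ∧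
    Tendsto (fun x : ℝ => θhat x / x) atTop (nhds 1) ∧
    Tendsto (fun x : ℝ => x - θhat x) atTop (nhds 0) := by
  have hP : 0 < Phi (-c) := Phi_pos _
  set M := phi 0 / Phi (-c) with hM
  have hkey : ∀ x, c ≤ x → 0 < θhat x ∧ θhat x ≤ x ∧
      x - θhat x ≤ phi (c - θhat x) / Phi (-c) :=
    fun x hx => key c hc x (θhat x) hx (hsol x hx)
  have hMb : ∀ x, c ≤ x → x - θhat x ≤ M := by
    intro x hx
    refine le_trans (hkey x hx).2.2 ?_
    rw [hM]
    gcongr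
    exact phi_anti (by nlinarith [sq_nonneg (c - θhat x)])
  have h3 : Tendsto (fun x : ℝ => x - θhat x) atTop (nhds 0) := by
    have hg : Tendsto (fun x : ℝ => phi (x - M - c) / Phi (-c)) atTop (nhds 0) := by
      have hc1 : Tendsto (fun x : ℝ => x - M - c) atTop atTop := by
        have := tendsto_atTop_add_const_right atTop (-M - c) tendsto_id
        refine this.congr fun x => by simp only [id_eq]; ring
      have := (phi_tendsto.comp hc1).div_const (Phi (-c))
      simpa using this
    refine tendsto_of_tendsto_of_tendsto_of_le_of_le' tendsto_const_nhds hg ?_ ?_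
    · filter_upwards [eventually_ge_atTop c] with x hx
      linarith [(hkey x hx).2.1]
    · filter_upwards [eventually_ge_atTop c, eventually_ge_atTop (M + c)] with x hx1 hx2
      obtain ⟨-, hle, hb⟩ := hkey x hx1
      have hθ : x - M ≤ θhat x := by linarith [hMb x hx1]
      have hϕ : phi (c - θhat x) ≤ phi (x - M - c) := phi_anti (by nlinarith)
      calc x - θhat x ≤ phi (c - θhat x) / Phi (-c) := hb
        _ ≤ phi (x - M - c) / Phi (-c) := by gcongr
  refine ⟨fun x hx => (hkey x hx).2.1, ?_, h3⟩
  have hinv : Tendsto (fun x : ℝ => (x - θhat x) * x⁻¹) atTop (nhds 0) := by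
    simpa using h3.mul tendsto_inv_atTop_zero
  have h1 : Tendsto (fun x : ℝ => 1 - (x - θhat x) * x⁻¹) atTop (nhds 1) := by
    simpa using (tendsto_const_nhds (x := (1:ℝ)) (f := atTop)).sub hinv
  refine h1.congr' ?_
  filter_upwards [eventually_gt_atTop (0:ℝ)] with x hx
  field_simp
  ring
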